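/- The bound d·μ(C') + 1 ≥ μ(C) for axiom downloads is tight: for the d-star graph G (center v connected to petals u₁,…,u_d) with χ(v) = 1 and χ(u_i) = 0 for all i, taking C = ∅ and C' = {A} where A = x_{e₁} ∨ ⋯ ∨ x_{e_d} is the axiom at the center, one has μ(C) = d + 1 and μ(C') = 1, so d·μ(C') + 1 = μ(C). -/

import Mathlib

/-- A literal over Boolean variables of type `X`: a variable together with a sign. -/
abbrev Lit (X : Type) := X × Bool

/-- A clause: a finite set of literals, interpreted disjunctively. -/
abbrev Clause (X : Type) := Finset (Lit X)

/-- A configuration: a finite set of clauses, interpreted conjunctively. -/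
abbrev Config (X : Type) := Finset (Clause X)

/-- The negation of a literal. -/
def negLit {X : Type} (l : Lit X) : Lit X := (l.1, !l.2)

/-- A clause (or term) is trivial if it contains both a variable and its negation. -/
def IsTrivialClause {X : Type} (C : Clause X) : Prop :=
  ∃ v : X, (v, true) ∈ C ∧ (v, false) ∈ C

/-- A total assignment satisfies a literal. -/
def SatLit {X : Type} (α : X → Bool) (l : Lit X) : Prop := α l.1 = l.2

/-- A total assignment satisfies a clause (some literal is true). -/
def SatClause {X : Type} (α : X → Bool) (C : Clause X) : Prop := ∃ l ∈ C, SatLit α l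

/-- A total assignment satisfies a term (all literals are true). -/
def SatTerm {X : Type} (α : X → Bool) (T : Finset (Lit X)) : Prop := ∀ l ∈ T, SatLit α l

/-- A total assignment satisfies a configuration (all clauses are true). -/
def SatConfig {X : Type} (α : X → Bool) (𝒞 : Config X) : Prop := ∀ C ∈ 𝒞, SatClause α C

/-- The term `¬E` negating a clause `E`. -/
def negTerm {X : Type} [DecidableEq X] (E : Clause X) : Finset (Lit X) := E.image negLit

/-- The edges of `G` incident to the vertex `v`. -/
def incidentEdges {V : Type} [Fintype V] [DecidableEq V] (G : SimpleGraph V)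
    [DecidableRel G.Adj] (v : V) : Finset (Sym2 V) :=
  G.edgeFinset.filter (fun e => v ∈ e)

/-- The canonical CNF encoding `PARITY_{v,χ}` of the parity constraint
`∑_{e ∋ v} x_e ≡ χ(v) (mod 2)`: for each assignment `f` of the edge variables
violating the constraint at `v`, the clause over the edges incident to `v`
falsified exactly by `f`. -/
def parityCNF {V : Type} [Fintype V] [DecidableEq V] (G : SimpleGraph V)
    [DecidableRel G.Adj] (χ : V → ZMod 2) (v : V) : Set (Clause (Sym2 V)) :=
  { C | ∃ f : Sym2 V → Bool,
      (∑ e ∈ incidentEdges G v, (if f e then (1 : ZMod 2) else 0)) ≠ χ v ∧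
      C = (incidentEdges G v).image (fun e => (e, ! f e)) }

/-- The Tseitin formula `Ts(G, χ) = ⋀_{v ∈ V} PARITY_{v,χ}`, as a set of clauses
over the edge variables. -/
def Tseitin {V : Type} [Fintype V] [DecidableEq V] (G : SimpleGraph V)
    [DecidableRel G.Adj] (χ : V → ZMod 2) : Set (Clause (Sym2 V)) :=
  ⋃ v : V, parityCNF G χ v

/-- The assignment `α` to the edge variables satisfies the parity constraint at `v`. -/
def SatParity {V : Type} [Fintype V] [DecidableEq V] (G : SimpleGraph V)
    [DecidableRel G.Adj] (χ : V → ZMod 2) (α : Sym2 V → Bool) (v : V) : Prop :=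
  (∑ e ∈ incidentEdges G v, (if α e then (1 : ZMod 2) else 0)) = χ v

/-- The term `T` together with the parity axioms of the vertices in `V'` is
unsatisfiable. -/
def UnsatWith {V : Type} [Fintype V] [DecidableEq V] (G : SimpleGraph V)
    [DecidableRel G.Adj] (χ : V → ZMod 2) (T : Finset (Lit (Sym2 V)))
    (V' : Finset V) : Prop :=
  ¬ ∃ α : Sym2 V → Bool, SatTerm α T ∧ ∀ v ∈ V', ∀ C ∈ parityCNF G χ v, SatClause α C

/-- The term complexity measure: `μ(T)` is the least number of parity axioms of
`Ts(G,χ)` that together with `T` are contradictory. -/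
noncomputable def muT {V : Type} [Fintype V] [DecidableEq V] (G : SimpleGraph V)
    [DecidableRel G.Adj] (χ : V → ZMod 2) (T : Finset (Lit (Sym2 V))) : ℕ :=
  sInf { n : ℕ | ∃ V' : Finset V, V'.card = n ∧ UnsatWith G χ T V' }

/-- The configuration complexity measure: `μ(𝒞)` is the maximum of `μ(T)` over
all terms `T` implying the configuration `𝒞`. -/
noncomputable def muC {V : Type} [Fintype V] [DecidableEq V] (G : SimpleGraph V)
    [DecidableRel G.Adj] (χ : V → ZMod 2) (𝒞 : Config (Sym2 V)) : ℕ :=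
  sSup { m : ℕ | ∃ T : Finset (Lit (Sym2 V)),
    (∀ α : Sym2 V → Bool, SatTerm α T → SatConfig α 𝒞) ∧ muT G χ T = m }

/-- The `d`-star graph: a center (vertex `0`) joined to `d` petals. -/
def starGraph (d : ℕ) : SimpleGraph (Fin (d + 1)) where
  Adj i j := i ≠ j ∧ (i = 0 ∨ j = 0)
  symm := ⟨by
    rintro i j ⟨h1, h2⟩
    exact ⟨h1.symm, h2.symm⟩⟩
  loopless := ⟨fun i h => h.1 rfl⟩

instance (d : ℕ) : DecidableRel (starGraph d).Adj :=
  fun i j => inferInstanceAs (Decidable (i ≠ j ∧ (i = 0 ∨ j = 0)))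

/-- The charge function for the star: charge `1` at the center, `0` at the petals. -/
def starCharge (d : ℕ) : Fin (d + 1) → ZMod 2 := fun i => if i = 0 then 1 else 0

/-- The axiom `A = x_{e₁} ∨ ⋯ ∨ x_{e_d}` at the center of the star. -/
def starAxiom (d : ℕ) : Clause (Sym2 (Fin (d + 1))) :=
  (Finset.univ.erase (0 : Fin (d + 1))).image
    (fun i => (s((0 : Fin (d + 1)), i), true))

-- Auxiliary lemmas

section General
variable {V : Type} [Fintype V] [DecidableEq V] (G : SimpleGraph V)
    [DecidableRel G.Adj] (χ : V → ZMod 2)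

/-- Satisfying all clauses of `parityCNF` is equivalent to satisfying the parity. -/
lemma satParity_iff (α : Sym2 V → Bool) (v : V) :
    (∀ C ∈ parityCNF G χ v, SatClause α C) ↔ SatParity G χ α v := by
  constructor
  · intro h
    by_contra hp
    obtain ⟨l, hl, hsat⟩ := h _ ⟨α, hp, rfl⟩
    simp only [Finset.mem_image] at hl
    obtain ⟨e, _, rfl⟩ := hl
    simp [SatLit] at hsat
  · rintro hp C ⟨f, hf, rfl⟩
    have : ∃ e ∈ incidentEdges G v, α e ≠ f e := by
      by_contra hc
      push_neg at hc
      apply hf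
      rw [← hp]
      exact Finset.sum_congr rfl fun e he => by rw [hc e he]
    obtain ⟨e, he, hne⟩ := this
    refine ⟨(e, ! f e), Finset.mem_image_of_mem _ he, ?_⟩
    simp only [SatLit]
    cases hfe : f e <;> cases hae : α e <;> simp_all

end General

section Star
variable {d : ℕ}

local notation "Ed" => fun (i : Fin (d+1)) => s((0 : Fin (d+1)), i)

lemma star_incident_zero :
    incidentEdges (starGraph d) 0 =
      (Finset.univ.erase (0 : Fin (d+1))).image (fun i => s((0 : Fin (d+1)), i)) := by
  ext e
  induction e using Sym2.inductionOn with
  | hf a b =>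
    simp only [incidentEdges, Finset.mem_filter, SimpleGraph.mem_edgeFinset,
      SimpleGraph.mem_edgeSet, Finset.mem_image, Finset.mem_erase, Finset.mem_univ,
      and_true, Sym2.mem_iff]
    constructor
    · rintro ⟨⟨hne, h0⟩, hv⟩
      rcases h0 with rfl | rfl
      · exact ⟨b, fun hb => hne hb.symm, rfl⟩
      · exact ⟨a, fun ha => hne ha, Sym2.eq_swap⟩
    · rintro ⟨i, hi, he⟩
      rw [Sym2.eq_iff] at he
      rcases he with ⟨rfl, rfl⟩ | ⟨rfl, rfl⟩
      · exact ⟨⟨fun h => hi h.symm, Or.inl rfl⟩, Or.inl rfl⟩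
      · exact ⟨⟨hi, Or.inr rfl⟩, Or.inr rfl⟩

lemma star_incident_petal {i : Fin (d+1)} (hi : i ≠ 0) :
    incidentEdges (starGraph d) i = {s((0 : Fin (d+1)), i)} := by
  ext e
  induction e using Sym2.inductionOn with
  | hf a b =>
    simp only [incidentEdges, Finset.mem_filter, SimpleGraph.mem_edgeFinset,
      SimpleGraph.mem_edgeSet, Finset.mem_singleton, Sym2.mem_iff]
    constructor
    · rintro ⟨⟨hne, h0⟩, hv⟩
      rcases h0 with rfl | rfl
      · rcases hv with rfl | rfl
        · exact absurd rfl hi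
        · rfl
      · rcases hv with rfl | rfl
        · exact Sym2.eq_swap
        · exact absurd rfl hi
    · rintro he
      rw [Sym2.eq_iff] at he
      rcases he with ⟨rfl, rfl⟩ | ⟨rfl, rfl⟩
      · exact ⟨⟨fun h => hi h.symm, Or.inl rfl⟩, Or.inr rfl⟩
      · exact ⟨⟨hi, Or.inr rfl⟩, Or.inl rfl⟩

lemma star_edge_inj : Set.InjOn (fun i : Fin (d+1) => s((0:Fin (d+1)), i))
    ↑(Finset.univ.erase (0 : Fin (d+1))) := by
  intro a ha b hb h
  simp only [Sym2.eq_iff] at h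
  rcases h with ⟨_, h⟩ | ⟨h1, h2⟩
  · exact h
  · simp only [Finset.coe_erase, Set.mem_diff, Set.mem_singleton_iff] at ha
    exact absurd h2 ha.2

end Star

section Star2
variable {d : ℕ}

lemma star_satParity_petal {i : Fin (d+1)} (hi : i ≠ 0) (α : Sym2 (Fin (d+1)) → Bool) :
    SatParity (starGraph d) (starCharge d) α i ↔ α s((0:Fin (d+1)), i) = false := by
  unfold SatParity
  rw [star_incident_petal hi, Finset.sum_singleton, starCharge, if_neg hi]
  cases h : α s((0:Fin (d+1)), i) <;> simp

lemma star_satParity_center (α : Sym2 (Fin (d+1)) → Bool) :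
    SatParity (starGraph d) (starCharge d) α 0 ↔
      (∑ i ∈ Finset.univ.erase (0 : Fin (d+1)),
        (if α s((0:Fin (d+1)), i) then (1 : ZMod 2) else 0)) = 1 := by
  unfold SatParity
  rw [star_incident_zero, Finset.sum_image star_edge_inj, starCharge, if_pos rfl]

/-- With all vertices' parity axioms, anything is unsatisfiable. -/
lemma star_unsat_univ (T : Finset (Lit (Sym2 (Fin (d+1))))) :
    UnsatWith (starGraph d) (starCharge d) T Finset.univ := by
  rintro ⟨α, _, hpar⟩
  have hcen := (satParity_iff _ _ α 0).1 (hpar 0 (Finset.mem_univ _))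
  rw [star_satParity_center] at hcen
  have : ∀ i ∈ Finset.univ.erase (0 : Fin (d+1)),
      (if α s((0:Fin (d+1)), i) then (1 : ZMod 2) else 0) = 0 := by
    intro i hi
    have hi0 : i ≠ 0 := (Finset.mem_erase.1 hi).1
    have := (star_satParity_petal hi0 α).1
      ((satParity_iff _ _ α i).1 (hpar i (Finset.mem_univ _)))
    simp [this]
  rw [Finset.sum_congr rfl this, Finset.sum_const_zero] at hcen
  exact one_ne_zero hcen.symm

/-- If some vertex is not in `V'`, the parity axioms of `V'` are satisfiable. -/
lemma star_sat_missing (V' : Finset (Fin (d+1))) {w : Fin (d+1)} (hw : w ∉ V') :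
    ∃ α : Sym2 (Fin (d+1)) → Bool,
      ∀ v ∈ V', ∀ C ∈ parityCNF (starGraph d) (starCharge d) v, SatClause α C := by
  by_cases hw0 : w = 0
  · refine ⟨fun _ => false, fun v hv => (satParity_iff _ _ _ v).2 ?_⟩
    have hv0 : v ≠ 0 := fun h => hw (by rwa [hw0, ← h])
    exact (star_satParity_petal hv0 _).2 rfl
  · refine ⟨fun e => decide (e = s((0:Fin (d+1)), w)),
      fun v hv => (satParity_iff _ _ _ v).2 ?_⟩
    by_cases hv0 : v = 0
    · subst hv0
      rw [star_satParity_center]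
      have : ∀ i ∈ Finset.univ.erase (0 : Fin (d+1)),
          (if (decide (s((0:Fin (d+1)), i) = s((0:Fin (d+1)), w)) : Bool)
            then (1 : ZMod 2) else 0) = if i = w then 1 else 0 := by
        intro i hi
        by_cases hiw : i = w
        · simp [hiw]
        · have : s((0:Fin (d+1)), i) ≠ s((0:Fin (d+1)), w) := by
            intro h
            exact hiw (star_edge_inj (by simp [(Finset.mem_erase.1 hi).1])
              (by simp [hw0]) h)
          simp [this, hiw]
      rw [Finset.sum_congr rfl this, Finset.sum_ite_eq' _ w (fun _ => (1 : ZMod 2))]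
      simp [hw0]
    · rw [star_satParity_petal hv0]
      have : s((0:Fin (d+1)), v) ≠ s((0:Fin (d+1)), w) := by
        intro h
        exact hw ((star_edge_inj (by simp [hv0]) (by simp [hw0]) h) ▸ hv)
      simp [this]

end Star2

section Star3
variable {d : ℕ}

lemma star_muT_le (T : Finset (Lit (Sym2 (Fin (d+1))))) :
    muT (starGraph d) (starCharge d) T ≤ d + 1 :=
  Nat.sInf_le ⟨Finset.univ, by simp, star_unsat_univ T⟩

lemma star_muT_empty :
    muT (starGraph d) (starCharge d) (∅ : Finset (Lit (Sym2 (Fin (d+1))))) = d + 1 := by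
  refine le_antisymm (star_muT_le _) (le_csInf ⟨d+1, Finset.univ, by simp,
    star_unsat_univ _⟩ ?_)
  rintro n ⟨V', rfl, hU⟩
  by_contra h
  push_neg at h
  obtain ⟨w, hw⟩ : ∃ w, w ∉ V' := by
    by_contra hc
    push_neg at hc
    have := Finset.eq_univ_iff_forall.2 hc
    rw [this, Finset.card_univ, Fintype.card_fin] at h
    omega
  obtain ⟨α, hα⟩ := star_sat_missing V' hw
  exact hU ⟨α, fun l hl => absurd hl (Finset.notMem_empty l), hα⟩

lemma star_muC_empty :
    muC (starGraph d) (starCharge d) (∅ : Config (Sym2 (Fin (d+1)))) = d + 1 := by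
  have hmem : d + 1 ∈ { m : ℕ | ∃ T : Finset (Lit (Sym2 (Fin (d+1)))),
      (∀ α : Sym2 (Fin (d+1)) → Bool, SatTerm α T → SatConfig α (∅ : Config (Sym2 (Fin (d+1))))) ∧
      muT (starGraph d) (starCharge d) T = m } :=
    ⟨∅, fun α _ C hC => absurd hC (Finset.notMem_empty C), star_muT_empty⟩
  refine le_antisymm (csSup_le ⟨d+1, hmem⟩ ?_) (le_csSup ⟨d+1, ?_⟩ hmem)
  · rintro m ⟨T, _, rfl⟩
    exact star_muT_le T
  · rintro m ⟨T, _, rfl⟩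
    exact star_muT_le T

lemma star_muT_le_one (T : Finset (Lit (Sym2 (Fin (d+1)))))
    (himp : ∀ α : Sym2 (Fin (d+1)) → Bool, SatTerm α T →
      SatConfig α ({starAxiom d} : Config (Sym2 (Fin (d+1))))) :
    muT (starGraph d) (starCharge d) T ≤ 1 := by
  by_cases hsat : ∃ α : Sym2 (Fin (d+1)) → Bool, SatTerm α T
  · obtain ⟨α₀, h0⟩ := hsat
    set α : Sym2 (Fin (d+1)) → Bool := fun e => decide ((e, true) ∈ T) with hα
    have hT : SatTerm α T := by
      rintro ⟨x, b⟩ hl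
      cases b
      · have hnt : (x, true) ∉ T := fun h => by
          have h1 := h0 _ h
          have h2 := h0 _ hl
          simp only [SatLit] at h1 h2
          rw [h1] at h2
          exact Bool.noConfusion h2
        simp [SatLit, hα, hnt]
      · simp [SatLit, hα, hl]
    obtain ⟨l, hl, hsl⟩ := himp α hT (starAxiom d) (Finset.mem_singleton_self _)
    simp only [starAxiom, Finset.mem_image, Finset.mem_erase] at hl
    obtain ⟨i, ⟨hi0, _⟩, rfl⟩ := hl
    have hmem : (s((0:Fin (d+1)), i), true) ∈ T := by
      simpa [SatLit, hα] using hsl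
    apply Nat.sInf_le
    refine ⟨{i}, Finset.card_singleton i, ?_⟩
    rintro ⟨β, hβT, hβP⟩
    have h1 : β s((0:Fin (d+1)), i) = true := hβT _ hmem
    have h2 := (star_satParity_petal hi0 β).1
      ((satParity_iff _ _ β i).1 (hβP i (Finset.mem_singleton_self i)))
    rw [h1] at h2
    exact Bool.noConfusion h2
  · refine le_trans (Nat.sInf_le ⟨∅, rfl, ?_⟩) (Nat.zero_le 1)
    rintro ⟨α, hα, _⟩
    exact hsat ⟨α, hα⟩

lemma star_muC_singleton (hd : 1 ≤ d) :
    muC (starGraph d) (starCharge d)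
      ({starAxiom d} : Config (Sym2 (Fin (d+1)))) = 1 := by
  set i₁ : Fin (d+1) := ⟨1, by omega⟩ with hi₁
  have hi10 : i₁ ≠ 0 := by
    intro h
    have := congrArg Fin.val h
    simp [hi₁] at this
  set T₀ : Finset (Lit (Sym2 (Fin (d+1)))) := {(s((0:Fin (d+1)), i₁), true)} with hT₀
  have himp : ∀ α : Sym2 (Fin (d+1)) → Bool, SatTerm α T₀ →
      SatConfig α ({starAxiom d} : Config (Sym2 (Fin (d+1)))) := by
    intro α hα C hC
    rw [Finset.mem_singleton] at hC
    subst hC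
    refine ⟨(s((0:Fin (d+1)), i₁), true), ?_, hα _ (Finset.mem_singleton_self _)⟩
    exact Finset.mem_image_of_mem _ (Finset.mem_erase.2 ⟨hi10, Finset.mem_univ _⟩)
  have hmu1 : muT (starGraph d) (starCharge d) T₀ = 1 := by
    refine le_antisymm (star_muT_le_one T₀ himp) (le_csInf ⟨d+1, Finset.univ, by simp,
      star_unsat_univ _⟩ ?_)
    rintro n ⟨V', rfl, hU⟩
    by_contra h
    push_neg at h
    interval_cases h' : V'.card
    rw [Finset.card_eq_zero] at h'
    subst h'
    refine hU ⟨fun _ => true, ?_, fun v hv => absurd hv (Finset.notMem_empty v)⟩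
    rintro ⟨x, b⟩ hl
    rw [hT₀, Finset.mem_singleton] at hl
    rw [hl]
    rfl
  have hmem : 1 ∈ { m : ℕ | ∃ T : Finset (Lit (Sym2 (Fin (d+1)))),
      (∀ α : Sym2 (Fin (d+1)) → Bool, SatTerm α T →
        SatConfig α ({starAxiom d} : Config (Sym2 (Fin (d+1))))) ∧
      muT (starGraph d) (starCharge d) T = m } := ⟨T₀, himp, hmu1⟩
  refine le_antisymm (csSup_le ⟨1, hmem⟩ ?_) (le_csSup ⟨1, ?_⟩ hmem)
  · rintro m ⟨T, hT, rfl⟩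
    exact star_muT_le_one T hT
  · rintro m ⟨T, hT, rfl⟩
    exact star_muT_le_one T hT

lemma star_axiom_mem :
    starAxiom d ∈ parityCNF (starGraph d) (starCharge d) 0 := by
  refine ⟨fun _ => false, ?_, ?_⟩
  · simp [starCharge]
  · rw [star_incident_zero, Finset.image_image]
    rfl

end Star3
/-- the bound `d·μ(𝒞') + 1 ≥ μ(𝒞)` for axiom downloads is tight: for
the `d`-star with charge `1` at the center and `0` at the petals, taking `𝒞 = ∅`
and `𝒞' = {A}` for the axiom `A = x_{e₁} ∨ ⋯ ∨ x_{e_d}` at the center, one has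
`μ(𝒞) = d + 1` and `μ(𝒞') = 1`, so `d·μ(𝒞') + 1 = μ(𝒞)`. -/
theorem star_measure_drop_tight (d : ℕ) (hd : 1 ≤ d) :
    starAxiom d ∈ parityCNF (starGraph d) (starCharge d) 0 ∧
    muC (starGraph d) (starCharge d) (∅ : Config (Sym2 (Fin (d + 1)))) = d + 1 ∧
    muC (starGraph d) (starCharge d) ({starAxiom d} : Config (Sym2 (Fin (d + 1)))) = 1 ∧
    d * muC (starGraph d) (starCharge d) ({starAxiom d} : Config (Sym2 (Fin (d + 1)))) + 1
      = muC (starGraph d) (starCharge d) (∅ : Config (Sym2 (Fin (d + 1)))) := by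
  refine ⟨star_axiom_mem, star_muC_empty, star_muC_singleton hd, ?_⟩
  rw [star_muC_singleton hd, star_muC_empty, mul_one]
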